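/- For any completely positive trace-decreasing map E on density operators, and any two density operators ρ and σ with t(E|ρ) > 0 and t(E|σ) > 0, the trace distance D(ρ,σ) := (1/2)Tr|ρ − σ| satisfies D(ρ,σ) ≥ t(E|ρ) · D(E[ρ]/t(E|ρ), E[σ]/t(E|σ)). -/

import Mathlib

open Matrix Kronecker MeasureTheory ComplexOrder

noncomputable section

def msqrt {α : Type*} [Fintype α] [DecidableEq α] (A : Matrix α α ℂ) : Matrix α α ℂ :=
  open scoped Classical in
  if h : A.PosSemidef then (h.1.eigenvectorUnitary : Matrix α α ℂ) *
      diagonal ((↑) ∘ Real.sqrt ∘ h.1.eigenvalues) * (star (h.1.eigenvectorUnitary : Matrix α α ℂ))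
    else 0

def fid {α : Type*} [Fintype α] [DecidableEq α] (ρ σ : Matrix α α ℂ) : ℝ :=
  ((msqrt (msqrt ρ * σ * msqrt ρ)).trace).re ^ 2

def sineDist {α : Type*} [Fintype α] [DecidableEq α] (ρ σ : Matrix α α ℂ) : ℝ :=
  Real.sqrt (1 - fid ρ σ)

def traceDist {α : Type*} [Fintype α] [DecidableEq α] (ρ σ : Matrix α α ℂ) : ℝ :=
  (1/2) * ((msqrt ((ρ - σ)ᴴ * (ρ - σ))).trace).re

def IsDensity {α : Type*} [Fintype α] (ρ : Matrix α α ℂ) : Prop :=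
  ρ.PosSemidef ∧ ρ.trace = 1

def IsPureState {α : Type*} [Fintype α] (ρ : Matrix α α ℂ) : Prop :=
  IsDensity ρ ∧ ∃ ψ : α → ℂ, ρ = Matrix.vecMulVec ψ (star ψ)

def tr' {α : Type*} [Fintype α] (A : Matrix α α ℂ) : ℝ := A.trace.re

def nstate {α : Type*} [Fintype α] (ρ : Matrix α α ℂ) : Matrix α α ℂ :=
  (((tr' ρ : ℝ) : ℂ))⁻¹ • ρ

def IsCPTD {α β : Type*} [Fintype α] [Fintype β] [DecidableEq α] [DecidableEq β]
    (E : Matrix α α ℂ →ₗ[ℂ] Matrix β β ℂ) : Prop :=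
  ∃ (k : ℕ) (K : Fin k → Matrix β α ℂ),
    (∀ ρ, E ρ = ∑ i, K i * ρ * (K i)ᴴ) ∧ (1 - ∑ i, (K i)ᴴ * K i).PosSemidef

def IsCPTP {α β : Type*} [Fintype α] [Fintype β] [DecidableEq α] [DecidableEq β]
    (E : Matrix α α ℂ →ₗ[ℂ] Matrix β β ℂ) : Prop :=
  ∃ (k : ℕ) (K : Fin k → Matrix β α ℂ),
    (∀ ρ, E ρ = ∑ i, K i * ρ * (K i)ᴴ) ∧ (∑ i, (K i)ᴴ * K i = 1)

def tensId {α β γ : Type*} [Fintype α]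
    (E : Matrix α α ℂ → Matrix β β ℂ)
    (ρ : Matrix (α × γ) (α × γ) ℂ) : Matrix (β × γ) (β × γ) ℂ :=
  Matrix.of fun p q => E (Matrix.of fun a b => ρ (a, p.2) (b, q.2)) p.1 q.1

def maxEnt (d : ℕ) : Matrix (Fin d × Fin d) (Fin d × Fin d) ℂ :=
  Matrix.of fun p q => if p.1 = p.2 ∧ q.1 = q.2 then ((d : ℂ))⁻¹ else 0

def ptraceSnd {α β : Type*} [Fintype β] (ρ : Matrix (α × β) (α × β) ℂ) : Matrix α α ℂ :=
  Matrix.of fun a b => ∑ j, ρ (a, j) (b, j)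

def ptraceFst {α β : Type*} [Fintype α] (ρ : Matrix (α × β) (α × β) ℂ) : Matrix β β ℂ :=
  Matrix.of fun i j => ∑ a, ρ (a, i) (a, j)

def choiSine {m n : ℕ} (E₁ E₂ : Matrix (Fin m) (Fin m) ℂ →ₗ[ℂ] Matrix (Fin n) (Fin n) ℂ) : ℝ :=
  sineDist (nstate (tensId (⇑E₁) (maxEnt m))) (nstate (tensId (⇑E₂) (maxEnt m)))

def diamondSine {m n : ℕ} (E₁ E₂ : Matrix (Fin m) (Fin m) ℂ →ₗ[ℂ] Matrix (Fin n) (Fin n) ℂ) : ℝ :=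
  sSup { x | ∃ ρ : Matrix (Fin m × Fin m) (Fin m × Fin m) ℂ, IsPureState ρ ∧
    tr' (tensId (⇑E₁) ρ) ≠ 0 ∧ tr' (tensId (⇑E₂) ρ) ≠ 0 ∧
    x = sineDist (nstate (tensId (⇑E₁) ρ)) (nstate (tensId (⇑E₂) ρ)) }

section EPIaux
open Matrix ComplexOrder
variable {n : Type*} [Fintype n] [DecidableEq n]
open scoped MatrixOrder

/-- Conjugation of a real diagonal by the eigenvector unitary of a Hermitian matrix. -/
noncomputable def cd {X : Matrix n n ℂ} (hX : X.IsHermitian) (f : n → ℝ) : Matrix n n ℂ :=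
  (hX.eigenvectorUnitary : Matrix n n ℂ) * Matrix.diagonal (fun i => (f i : ℂ)) *
    (star (hX.eigenvectorUnitary : Matrix n n ℂ))

lemma cd_eigen {X : Matrix n n ℂ} (hX : X.IsHermitian) : cd hX hX.eigenvalues = X := by
  rw [cd]
  exact hX.spectral_theorem.symm

lemma cd_mul {X : Matrix n n ℂ} (hX : X.IsHermitian) (f g : n → ℝ) :
    cd hX f * cd hX g = cd hX (fun i => f i * g i) := by
  have hU : (star (hX.eigenvectorUnitary : Matrix n n ℂ)) *
      (hX.eigenvectorUnitary : Matrix n n ℂ) = 1 :=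
    Matrix.mem_unitaryGroup_iff'.mp hX.eigenvectorUnitary.2
  simp only [cd, Matrix.mul_assoc]
  rw [← Matrix.mul_assoc (star _) _ , hU, Matrix.one_mul, ← Matrix.mul_assoc (Matrix.diagonal _),
    Matrix.diagonal_mul_diagonal]
  push_cast
  ring_nf

lemma cd_trace {X : Matrix n n ℂ} (hX : X.IsHermitian) (f : n → ℝ) :
    (cd hX f).trace = ∑ i, (f i : ℂ) := by
  have hU : (star (hX.eigenvectorUnitary : Matrix n n ℂ)) *
      (hX.eigenvectorUnitary : Matrix n n ℂ) = 1 :=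
    Matrix.mem_unitaryGroup_iff'.mp hX.eigenvectorUnitary.2
  rw [cd, Matrix.trace_mul_cycle, hU, Matrix.one_mul, Matrix.trace_diagonal]

lemma cd_psd {X : Matrix n n ℂ} (hX : X.IsHermitian) (f : n → ℝ) (hf : ∀ i, 0 ≤ f i) :
    (cd hX f).PosSemidef := by
  have h : Matrix.PosSemidef (Matrix.diagonal (fun i => (f i : ℂ))) :=
    Matrix.posSemidef_diagonal_iff.mpr fun i => by
      simpa using Complex.zero_le_real.mpr (hf i)
  simpa [cd, Matrix.star_eq_conjTranspose] using
    h.mul_mul_conjTranspose_same (hX.eigenvectorUnitary : Matrix n n ℂ)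

lemma cd_sub {X : Matrix n n ℂ} (hX : X.IsHermitian) (f g : n → ℝ) :
    cd hX f - cd hX g = cd hX (fun i => f i - g i) := by
  simp only [cd, ← Matrix.sub_mul, ← Matrix.mul_sub, Matrix.diagonal_sub]
  push_cast
  rfl

lemma cd_one {X : Matrix n n ℂ} (hX : X.IsHermitian) : cd hX (fun _ => 1) = 1 := by
  have hU : (hX.eigenvectorUnitary : Matrix n n ℂ) *
      (star (hX.eigenvectorUnitary : Matrix n n ℂ)) = 1 :=
    Matrix.mem_unitaryGroup_iff.mp hX.eigenvectorUnitary.2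
  simp [cd, Matrix.diagonal_one, hU]

lemma psd_trace_re_nonneg {A : Matrix n n ℂ} (hA : A.PosSemidef) : 0 ≤ A.trace.re := by
  have h : ∀ i, 0 ≤ (A i i).re := by
    intro i
    have h0 := hA.dotProduct_mulVec_nonneg (Pi.single i 1)
    have h2 : (0 : ℂ) ≤ A i i := hA.diag_nonneg
    simpa using (Complex.le_def.mp h2).1
  simpa [Matrix.trace, Matrix.diag, Complex.re_sum] using Finset.sum_nonneg fun i _ => h i

lemma trace_mul_re_nonneg {A B : Matrix n n ℂ} (hA : A.PosSemidef) (hB : B.PosSemidef) :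
    0 ≤ (A * B).trace.re := by
  obtain ⟨C, hC⟩ := CStarAlgebra.nonneg_iff_eq_star_mul_self.mp hB.nonneg
  rw [hC, ← Matrix.mul_assoc, Matrix.trace_mul_cycle]
  exact psd_trace_re_nonneg (hA.mul_mul_conjTranspose_same C)

lemma herm_trace_real {A : Matrix n n ℂ} (hA : A.IsHermitian) : A.trace = (A.trace.re : ℂ) := by
  have h := Matrix.trace_conjTranspose A
  rw [hA.eq] at h
  exact (Complex.conj_eq_iff_re.mp h.symm).symm

lemma traceDist_eq_sum {A B : Matrix n n ℂ} (h : (A - B).IsHermitian) :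
    traceDist A B = (1/2) * ∑ i, |h.eigenvalues i| := by
  have hpsd : ((A - B)ᴴ * (A - B)).PosSemidef := Matrix.posSemidef_conjTranspose_mul_self (A - B)
  have hsq : (cd h (fun i => |h.eigenvalues i|)) ^ 2 = (A - B)ᴴ * (A - B) := by
    rw [pow_two, cd_mul, h.eq]
    conv_rhs => rw [← cd_eigen h, cd_mul]
    exact congrArg (cd h) (funext fun i => abs_mul_abs_self _)
  have habs : msqrt ((A - B)ᴴ * (A - B)) = cd h (fun i => |h.eigenvalues i|) := by
    rw [msqrt, dif_pos hpsd]
    have e : (hpsd.1.eigenvectorUnitary : Matrix n n ℂ) *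
        diagonal ((↑) ∘ Real.sqrt ∘ hpsd.1.eigenvalues) *
        (star (hpsd.1.eigenvectorUnitary : Matrix n n ℂ)) = cfc Real.sqrt ((A - B)ᴴ * (A - B)) := by
      rw [hpsd.1.cfc_eq, IsHermitian.cfc, Unitary.conjStarAlgAut_apply]; rfl
    rw [e, ← cfcₙ_eq_cfc, ← CFC.sqrt_eq_real_sqrt _ hpsd.nonneg]
    exact CFC.sqrt_unique (by rw [← pow_two]; exact hsq) (cd_psd h _ fun i => abs_nonneg _).nonneg
  rw [traceDist, habs, cd_trace]
  norm_num [Complex.re_sum]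

lemma traceDist_comm (A B : Matrix n n ℂ) : traceDist A B = traceDist B A := by
  have h : (B - A)ᴴ * (B - A) = (A - B)ᴴ * (A - B) := by
    rw [← neg_sub A B, Matrix.conjTranspose_neg, Matrix.neg_mul, Matrix.mul_neg, neg_neg]
  rw [traceDist, traceDist, h]

lemma half_sum_abs {f : n → ℝ} (h : ∑ i, f i = 0) :
    (1/2) * ∑ i, |f i| = ∑ i, max (f i) 0 := by
  have habs : ∀ i, |f i| = 2 * max (f i) 0 - f i := by
    intro i
    rcases le_total (f i) 0 with hi | hi
    · rw [abs_of_nonpos hi, max_eq_right hi]; ring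
    · rw [abs_of_nonneg hi, max_eq_left hi]; ring
  rw [Finset.sum_congr rfl fun i _ => habs i, Finset.sum_sub_distrib, h, sub_zero,
    ← Finset.mul_sum]
  ring

lemma eigen_sum_zero {X : Matrix n n ℂ} (hX : X.IsHermitian) (h : X.trace = 0) :
    ∑ i, hX.eigenvalues i = 0 := by
  have h1 : X.trace = ∑ i, (hX.eigenvalues i : ℂ) := by
    conv_lhs => rw [← cd_eigen hX]
    rw [cd_trace]
  rw [h] at h1
  have h2 : ((∑ i, hX.eigenvalues i : ℝ) : ℂ) = 0 := by push_cast; rw [← h1]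
  exact_mod_cast h2

variable {α β : Type*} [Fintype α] [Fintype β] [DecidableEq α] [DecidableEq β]
variable {E : Matrix α α ℂ →ₗ[ℂ] Matrix β β ℂ}

lemma cptd_psd (hE : IsCPTD E) {A : Matrix α α ℂ} (hA : A.PosSemidef) : (E A).PosSemidef := by
  obtain ⟨k, K, hK, -⟩ := hE
  rw [hK]
  exact Finset.sum_induction (fun i => K i * A * (K i)ᴴ) (fun M => M.PosSemidef)
    (fun a b ha hb => ha.add hb) Matrix.PosSemidef.zero
    (fun i _ => hA.mul_mul_conjTranspose_same (K i))

lemma cptd_trace_le (hE : IsCPTD E) {A : Matrix α α ℂ} (hA : A.PosSemidef) :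
    (E A).trace.re ≤ A.trace.re := by
  obtain ⟨k, K, hK, hTD⟩ := hE
  have h1 : (E A).trace = ((∑ i, (K i)ᴴ * K i) * A).trace := by
    rw [hK, Matrix.trace_sum, Finset.sum_mul, Matrix.trace_sum]
    exact Finset.sum_congr rfl fun i _ => by
      rw [Matrix.trace_mul_cycle, Matrix.mul_assoc]
  have h2 : 0 ≤ ((1 - ∑ i, (K i)ᴴ * K i) * A).trace.re := trace_mul_re_nonneg hTD hA
  rw [Matrix.sub_mul, Matrix.one_mul, Matrix.trace_sub, Complex.sub_re] at h2
  rw [h1]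
  linarith

lemma key_bound (hE : IsCPTD E) {Z : Matrix β β ℂ} (hZ : Z.IsHermitian)
    {P Q S : Matrix α α ℂ} (hP : P.PosSemidef) (hQ : Q.PosSemidef) (hS : S.PosSemidef)
    {t s : ℝ} (hs : s ≤ 0)
    (hZeq : (t : ℂ) • Z = E P - E Q + (s : ℂ) • E S) :
    t * ∑ i, max (hZ.eigenvalues i) 0 ≤ P.trace.re := by
  set ev := hZ.eigenvalues with hev
  set M := cd hZ (fun i => if 0 < ev i then 1 else 0) with hMdef
  have hM : M.PosSemidef := cd_psd hZ _ fun i => by positivity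
  have hM1 : (1 - M).PosSemidef := by
    rw [hMdef, ← cd_one hZ, cd_sub]
    refine cd_psd hZ _ fun i => ?_
    rcases lt_or_ge 0 (ev i) with hi | hi
    · simp [hi]
    · simp [not_lt.mpr hi]
  have hEP := cptd_psd hE hP
  have hEQ := cptd_psd hE hQ
  have hES := cptd_psd hE hS
  -- left side as a trace
  have hMZ : M * Z = cd hZ (fun i => (if 0 < ev i then 1 else 0) * ev i) := by
    conv_lhs => rw [← cd_eigen hZ]
    rw [hMdef, cd_mul]
  have hmax : (fun i => (if 0 < ev i then 1 else 0 : ℝ) * ev i) = fun i => max (ev i) 0 := by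
    funext i
    rcases lt_or_ge 0 (ev i) with hi | hi
    · simp [hi, max_eq_left hi.le]
    · simp [not_lt.mpr hi, max_eq_right hi]
  have hlhs : (M * ((t : ℂ) • Z)).trace.re = t * ∑ i, max (ev i) 0 := by
    rw [mul_smul_comm, Matrix.trace_smul, hMZ, hmax, cd_trace, smul_eq_mul,
      Complex.re_ofReal_mul]
    norm_num [Complex.re_sum]
  rw [← hlhs, hZeq]
  have hsplit : (M * (E P - E Q + (s : ℂ) • E S)).trace.re =
      (M * E P).trace.re - (M * E Q).trace.re + s * (M * E S).trace.re := by
    rw [Matrix.mul_add, Matrix.mul_sub, mul_smul_comm, Matrix.trace_add, Matrix.trace_sub,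
      Matrix.trace_smul, Complex.add_re, Complex.sub_re, smul_eq_mul, Complex.re_ofReal_mul]
  have b1 : 0 ≤ (M * E Q).trace.re := trace_mul_re_nonneg hM hEQ
  have b2 : 0 ≤ (M * E S).trace.re := trace_mul_re_nonneg hM hES
  have b3 : (M * E P).trace.re ≤ (E P).trace.re := by
    have h0 := trace_mul_re_nonneg hM1 hEP
    rw [Matrix.sub_mul, Matrix.one_mul, Matrix.trace_sub, Complex.sub_re] at h0
    linarith
  have b4 : (E P).trace.re ≤ P.trace.re := cptd_trace_le hE hP
  have b5 : s * (M * E S).trace.re ≤ 0 := mul_nonpos_of_nonpos_of_nonneg hs b2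
  rw [hsplit]
  linarith

end EPIaux

/-- Extended processing inequality for the trace distance under CPTD maps. -/
theorem extended_processing_inequality_trace {m n : ℕ}
    (E : Matrix (Fin m) (Fin m) ℂ →ₗ[ℂ] Matrix (Fin n) (Fin n) ℂ) (hE : IsCPTD E)
    (ρ σ : Matrix (Fin m) (Fin m) ℂ) (hρ : IsDensity ρ) (hσ : IsDensity σ)
    (htρ : 0 < tr' (E ρ)) (htσ : 0 < tr' (E σ)) :
    tr' (E ρ) * traceDist (nstate (E ρ)) (nstate (E σ)) ≤ traceDist ρ σ := by
  obtain ⟨hρpsd, hρtr⟩ := hρ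
  obtain ⟨hσpsd, hσtr⟩ := hσ
  have hEρ : (E ρ).PosSemidef := cptd_psd hE hρpsd
  have hEσ : (E σ).PosSemidef := cptd_psd hE hσpsd
  set tρ := tr' (E ρ) with htρdef
  set tσ := tr' (E σ) with htσdef
  have htrρ : (E ρ).trace = (tρ : ℂ) := herm_trace_real hEρ.1
  have htrσ : (E σ).trace = (tσ : ℂ) := herm_trace_real hEσ.1
  have hρne : (tρ : ℂ) ≠ 0 := Complex.ofReal_ne_zero.mpr htρ.ne'
  have hσne : (tσ : ℂ) ≠ 0 := Complex.ofReal_ne_zero.mpr htσ.ne'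
  -- Jordan decomposition of ρ - σ
  have hX : (ρ - σ).IsHermitian := hρpsd.1.sub hσpsd.1
  set μ := hX.eigenvalues with hμdef
  have hμ0 : ∑ i, μ i = 0 :=
    eigen_sum_zero hX (by rw [Matrix.trace_sub, hρtr, hσtr, sub_self])
  set P := cd hX (fun i => max (μ i) 0) with hPdef
  set Q := cd hX (fun i => max (-μ i) 0) with hQdef
  have hP : P.PosSemidef := cd_psd hX _ fun i => le_max_right _ _
  have hQ : Q.PosSemidef := cd_psd hX _ fun i => le_max_right _ _
  have hPQ : ρ - σ = P - Q := by
    rw [hPdef, hQdef, cd_sub]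
    conv_lhs => rw [← cd_eigen hX]
    refine congrArg (cd hX) (funext fun i => ?_)
    rcases le_total (μ i) 0 with hi | hi
    · rw [max_eq_right hi, max_eq_left (neg_nonneg.mpr hi)]; ring
    · rw [max_eq_left hi, max_eq_right (neg_nonpos.mpr hi)]; ring
  have hEPQ : E P - E Q = E ρ - E σ := by rw [← map_sub, ← map_sub, hPQ]
  have hPtr : P.trace.re = ∑ i, max (μ i) 0 := by
    rw [hPdef, cd_trace]; norm_num [Complex.re_sum]
  have hQtr : Q.trace.re = ∑ i, max (-μ i) 0 := by
    rw [hQdef, cd_trace]; norm_num [Complex.re_sum]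
  have hTD : traceDist ρ σ = ∑ i, max (μ i) 0 := by
    rw [traceDist_eq_sum hX, ← hμdef, half_sum_abs hμ0]
  have hTD' : traceDist ρ σ = ∑ i, max (-μ i) 0 := by
    have h2 : ∑ i, -μ i = 0 := by simp [hμ0]
    have h3 := half_sum_abs h2
    simp only [abs_neg] at h3
    rw [traceDist_eq_sum hX, ← hμdef, h3]
  -- normalized difference
  have hnρ : nstate (E ρ) = ((tρ : ℂ))⁻¹ • E ρ := rfl
  have hnσ : nstate (E σ) = ((tσ : ℂ))⁻¹ • E σ := rfl
  have hherm : ∀ (t : ℝ) (A : Matrix (Fin n) (Fin n) ℂ), A.IsHermitian →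
      (((t : ℂ))⁻¹ • A).IsHermitian := by
    intro t A hA
    unfold Matrix.IsHermitian
    rw [Matrix.conjTranspose_smul, hA.eq, star_inv₀, RCLike.star_def, Complex.conj_ofReal]
  rcases le_or_gt tσ tρ with hc | hc
  · -- case tσ ≤ tρ
    have hΔH : (nstate (E ρ) - nstate (E σ)).IsHermitian := by
      rw [hnρ, hnσ]; exact (hherm _ _ hEρ.1).sub (hherm _ _ hEσ.1)
    have hΔtr : (nstate (E ρ) - nstate (E σ)).trace = 0 := by
      rw [hnρ, hnσ, Matrix.trace_sub, Matrix.trace_smul, Matrix.trace_smul, htrρ, htrσ,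
        smul_eq_mul, smul_eq_mul, inv_mul_cancel₀ hρne, inv_mul_cancel₀ hσne, sub_self]
    have hlam0 : ∑ i, hΔH.eigenvalues i = 0 := eigen_sum_zero hΔH hΔtr
    have hs : (1 - tρ/tσ : ℝ) ≤ 0 := by
      have h1 : (1:ℝ) ≤ tρ/tσ := (one_le_div htσ).mpr hc
      linarith
    have hZeq : (tρ : ℂ) • (nstate (E ρ) - nstate (E σ)) =
        E P - E Q + ((1 - tρ/tσ : ℝ) : ℂ) • E σ := by
      rw [hnρ, hnσ, hEPQ, smul_sub, smul_smul, smul_smul, mul_inv_cancel₀ hρne, one_smul]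
      have e2 : (tρ : ℂ) * ((tσ : ℂ))⁻¹ = ((tρ/tσ : ℝ) : ℂ) := by push_cast; ring
      rw [e2]
      have e3 : ((1 - tρ/tσ : ℝ) : ℂ) = 1 - ((tρ/tσ : ℝ) : ℂ) := by push_cast; ring
      rw [e3, sub_smul, one_smul]
      abel
    have hkey := key_bound hE hΔH hP hQ hσpsd hs hZeq
    rw [traceDist_eq_sum hΔH, half_sum_abs hlam0, hTD]
    linarith [hkey, hPtr]
  · -- case tρ < tσ
    have hΔH : (nstate (E σ) - nstate (E ρ)).IsHermitian := by
      rw [hnρ, hnσ]; exact (hherm _ _ hEσ.1).sub (hherm _ _ hEρ.1)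
    have hΔtr : (nstate (E σ) - nstate (E ρ)).trace = 0 := by
      rw [hnρ, hnσ, Matrix.trace_sub, Matrix.trace_smul, Matrix.trace_smul, htrρ, htrσ,
        smul_eq_mul, smul_eq_mul, inv_mul_cancel₀ hρne, inv_mul_cancel₀ hσne, sub_self]
    have hlam0 : ∑ i, hΔH.eigenvalues i = 0 := eigen_sum_zero hΔH hΔtr
    have hs : (tρ/tσ - 1 : ℝ) ≤ 0 := by
      have h1 : tρ/tσ < 1 := (div_lt_one htσ).mpr hc
      linarith
    have hZeq : (tρ : ℂ) • (nstate (E σ) - nstate (E ρ)) =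
        E Q - E P + ((tρ/tσ - 1 : ℝ) : ℂ) • E σ := by
      have hEQP : E Q - E P = E σ - E ρ := by rw [← neg_sub (E P), hEPQ]; abel
      rw [hnρ, hnσ, hEQP, smul_sub, smul_smul, smul_smul, mul_inv_cancel₀ hρne, one_smul]
      have e2 : (tρ : ℂ) * ((tσ : ℂ))⁻¹ = ((tρ/tσ : ℝ) : ℂ) := by push_cast; ring
      rw [e2]
      have e3 : ((tρ/tσ - 1 : ℝ) : ℂ) = ((tρ/tσ : ℝ) : ℂ) - 1 := by push_cast; ring
      rw [e3, sub_smul, one_smul]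
      abel
    have hkey := key_bound hE hΔH hQ hP hσpsd hs hZeq
    rw [traceDist_comm, traceDist_eq_sum hΔH, half_sum_abs hlam0, hTD']
    linarith [hkey, hQtr]
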